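/- Let 3/4 < α < 1 and set β = (4α − 3)/(2(1 − α)). Then for every δ > 0, every x ∈ [0,1] for which there are infinitely many rationals a/q with q odd and |x − a/q| ≤ q^{−(2+β)} belongs to O_{α−δ}; that is, J^odd_β ⊆ O_{α−δ}. -/

import Mathlib

open Real Set

/-- The quadratic Weyl sum `w_N(x,t) = Σ_{n=1}^N e^{2πi(nx + n²t)}`. -/
noncomputable def weylSum (N : ℕ) (x t : ℝ) : ℂ :=
  ∑ n ∈ Finset.Icc 1 N, Complex.exp (2 * Real.pi * Complex.I * (n * x + n ^ 2 * t))


noncomputable def ee (s : ℝ) : ℂ := Complex.exp (2 * Real.pi * Complex.I * s)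

lemma ee_add (s t : ℝ) : ee (s + t) = ee s * ee t := by
  simp [ee, ← Complex.exp_add]; ring_nf

lemma ee_zero : ee 0 = 1 := by simp [ee]

lemma ee_int (k : ℤ) : ee k = 1 := by
  rw [ee, show 2 * (Real.pi:ℂ) * Complex.I * (k:ℝ) = (k:ℂ) * (2 * π * Complex.I) by push_cast; ring]
  exact Complex.exp_int_mul_two_pi_mul_I k

lemma abs_ee (s : ℝ) : ‖ee s‖ = 1 := by
  rw [ee, Complex.norm_exp]
  norm_num [Complex.mul_re]

lemma conj_ee (s : ℝ) : (starRingEnd ℂ) (ee s) = ee (-s) := by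
  rw [ee, ← Complex.exp_conj]
  congr 1
  simp [Complex.ext_iff]

lemma ee_add_int (s : ℝ) (k : ℤ) : ee (s + k) = ee s := by
  rw [ee_add, ee_int, mul_one]

lemma abs_ee_sub_one (s : ℝ) (h : 2 * π * |s| ≤ 1) :
    ‖ee s - 1‖ ≤ 4 * π * |s| := by
  have h1 : ‖2 * Real.pi * Complex.I * s‖ = 2 * π * |s| := by
    simp [abs_of_pos Real.pi_pos, Complex.norm_real]
  have := Complex.norm_exp_sub_one_le (x := 2 * Real.pi * Complex.I * s) (by rw [h1]; exact h)
  rw [h1] at this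
  calc ‖ee s - 1‖ ≤ 2 * (2 * π * |s|) := this
  _ = 4 * π * |s| := by ring

lemma ee_ne_one (s : ℝ) (h0 : 0 < s) (h1 : s < 1) : ee s ≠ 1 := by
  rw [ee, Ne, Complex.exp_eq_one_iff]
  rintro ⟨n, hn⟩
  have hpi : (2 * (π:ℂ) * Complex.I) ≠ 0 := by
    simp [Real.pi_ne_zero, Complex.I_ne_zero]
  have h2 : (s:ℂ) * (2 * (π:ℂ) * Complex.I) = (n:ℂ) * (2 * (π:ℂ) * Complex.I) := by
    rw [← hn]; ring
  have h3 : (s : ℂ) = (n : ℂ) := mul_right_cancel₀ hpi h2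
  have h4 : s = (n : ℝ) := by exact_mod_cast h3
  subst h4
  have h5 : (0:ℤ) < n := by exact_mod_cast h0
  have h6 : (n:ℝ) ≥ 1 := by exact_mod_cast h5
  linarith

noncomputable def EE (q : ℕ) (z : ZMod q) : ℂ := ee ((z.val : ℝ) / q)

lemma EE_int (q : ℕ) [NeZero q] (k : ℤ) : ee ((k : ℝ) / q) = EE q (k : ZMod q) := by
  have hq : (q : ℝ) ≠ 0 := Nat.cast_ne_zero.2 (NeZero.ne q)
  set z : ZMod q := (k : ZMod q)
  have hdvd : (q : ℤ) ∣ k - (z.val : ℤ) := by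
    rw [← ZMod.intCast_zmod_eq_zero_iff_dvd]
    push_cast
    simp [z, ZMod.natCast_val, ZMod.intCast_cast]
  obtain ⟨m, hm⟩ := hdvd
  have : (k : ℝ) / q = (z.val : ℝ) / q + m := by
    have : (k : ℝ) = (z.val : ℝ) + q * m := by
      have := congrArg (fun x : ℤ => (x : ℝ)) hm
      push_cast at this ⊢
      linarith
    rw [this]; field_simp
  rw [this, ee_add_int]
  rfl

lemma EE_add (q : ℕ) [NeZero q] (y z : ZMod q) : EE q (y + z) = EE q y * EE q z := by
  have h1 : EE q y * EE q z = ee (((y.val + z.val : ℕ) : ℝ) / q) := by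
    rw [EE, EE, ← ee_add]; push_cast; rw [← add_div]
  rw [h1, show ((y.val + z.val : ℕ) : ℝ) = (((y.val + z.val : ℕ) : ℤ) : ℝ) by push_cast; ring,
    EE_int]
  congr 1
  push_cast
  simp [ZMod.natCast_val, ZMod.intCast_cast]

lemma EE_zero (q : ℕ) [NeZero q] : EE q 0 = 1 := by
  simp [EE, ZMod.val_zero, ee_zero]

lemma conj_EE (q : ℕ) [NeZero q] (z : ZMod q) : (starRingEnd ℂ) (EE q z) = EE q (-z) := by
  rw [EE, conj_ee]
  have : ee (-(↑z.val / ↑q)) = ee ((((-(z.val : ℤ)) : ℤ) : ℝ) / q) := by push_cast; ring_nf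
  rw [this, EE_int]
  congr 1
  push_cast
  simp [ZMod.natCast_val, ZMod.intCast_cast]

lemma EE_ne_one (q : ℕ) [NeZero q] (z : ZMod q) (hz : z ≠ 0) : EE q z ≠ 1 := by
  have h1 : 0 < z.val := by
    rcases Nat.eq_zero_or_pos z.val with h | h
    · exact absurd ((ZMod.val_eq_zero z).mp h) hz
    · exact h
  have h2 : z.val < q := ZMod.val_lt z
  have hq : (0:ℝ) < q := Nat.cast_pos.2 (Nat.pos_of_ne_zero (NeZero.ne q))
  have h1' : (0:ℝ) < z.val := by exact_mod_cast h1
  exact ee_ne_one _ (div_pos h1' hq) ((div_lt_one hq).2 (by exact_mod_cast h2))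

lemma sum_EE_mul (q : ℕ) [NeZero q] (c : ZMod q) (hc : c ≠ 0) :
    ∑ z : ZMod q, EE q (c * z) = 0 := by
  have key : ∑ z : ZMod q, EE q (c * (z + 1)) = ∑ z : ZMod q, EE q (c * z) :=
    Fintype.sum_equiv (Equiv.addRight 1) _ _ (fun z => rfl)
  have expand : ∑ z : ZMod q, EE q (c * (z + 1)) = EE q c * ∑ z : ZMod q, EE q (c * z) := by
    rw [Finset.mul_sum]
    refine Finset.sum_congr rfl fun z _ => ?_
    rw [mul_add, mul_one, EE_add, mul_comm]
  have h0 : (EE q c - 1) * ∑ z : ZMod q, EE q (c * z) = 0 := by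
    rw [sub_mul, one_mul, ← expand, key, sub_self]
  rcases mul_eq_zero.mp h0 with h | h
  · exact absurd (sub_eq_zero.mp h) (EE_ne_one q c hc)
  · exact h

lemma two_mul_ne_zero (q : ℕ) [NeZero q] (hq : Odd q) (h : ZMod q) (hh : h ≠ 0) :
    2 * h ≠ 0 := by
  have hu : IsUnit (2 : ZMod q) := by
    have : IsUnit ((2 : ℕ) : ZMod q) := (ZMod.isUnit_iff_coprime 2 q).2
      (Nat.coprime_two_left.2 hq)
    simpa using this
  intro h2
  exact hh (by simpa using hu.mul_left_cancel (by simpa using h2 : (2:ZMod q) * h = 2 * 0))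

lemma gauss_sq (q : ℕ) [NeZero q] (hq : Odd q) (a : ZMod q) :
    (∑ z : ZMod q, EE q (a * z + z ^ 2)) * (starRingEnd ℂ) (∑ z : ZMod q, EE q (a * z + z ^ 2))
      = (q : ℂ) := by
  rw [map_sum]
  rw [Finset.sum_mul_sum]
  have step1 : ∀ m n : ZMod q, EE q (a * m + m ^ 2) * (starRingEnd ℂ) (EE q (a * n + n ^ 2))
      = EE q (a * m + m ^ 2 - a * n - n ^ 2) := by
    intro m n
    rw [conj_EE, ← EE_add]
    ring_nf
  calc (∑ m : ZMod q, ∑ n : ZMod q, EE q (a * m + m ^ 2) * (starRingEnd ℂ) (EE q (a * n + n ^ 2)))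
      = ∑ m : ZMod q, ∑ n : ZMod q, EE q (a * m + m ^ 2 - a * n - n ^ 2) := by
        exact Finset.sum_congr rfl fun m _ => Finset.sum_congr rfl fun n _ => step1 m n
    _ = ∑ n : ZMod q, ∑ m : ZMod q, EE q (a * m + m ^ 2 - a * n - n ^ 2) := Finset.sum_comm

    _ = ∑ n : ZMod q, ∑ h : ZMod q, EE q (a * h + h ^ 2 + 2 * h * n) := by
        refine Finset.sum_congr rfl fun n _ => ?_
        refine Fintype.sum_equiv (Equiv.subRight n) _ _ fun m => ?_
        congr 1
        show a * m + m ^ 2 - a * n - n ^ 2 = a * (m - n) + (m - n) ^ 2 + 2 * (m - n) * n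
        ring
    _ = ∑ h : ZMod q, ∑ n : ZMod q, EE q (a * h + h ^ 2) * EE q ((2 * h) * n) := by
        rw [Finset.sum_comm]
        exact Finset.sum_congr rfl fun h _ => Finset.sum_congr rfl fun n _ => by
          rw [← EE_add]
    _ = ∑ h : ZMod q, EE q (a * h + h ^ 2) * ∑ n : ZMod q, EE q ((2 * h) * n) := by
        simp [Finset.mul_sum]
    _ = (q : ℂ) := by
        rw [Finset.sum_eq_single 0]
        · simp [EE_zero, Finset.card_univ, ZMod.card]
        · intro h _ hh
          rw [sum_EE_mul q _ (two_mul_ne_zero q hq h hh), mul_zero]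
        · intro habs; exact absurd (Finset.mem_univ 0) habs

lemma sum_blocks (f : ℕ → ℂ) (K q : ℕ) :
    ∑ n ∈ Finset.Icc 1 (K*q), f n = ∑ j ∈ Finset.range K, ∑ r ∈ Finset.Icc 1 q, f (j*q + r) := by
  induction K with
  | zero => simp
  | succ K ih =>
    have h1 : Finset.Icc 1 ((K+1)*q) = Finset.Ioc 0 ((K+1)*q) := rfl
    have h2 : Finset.Icc 1 (K*q) = Finset.Ioc 0 (K*q) := rfl
    have hsplit : ∑ n ∈ Finset.Ioc 0 (K*q), f n + ∑ n ∈ Finset.Ioc (K*q) ((K+1)*q), f n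
        = ∑ n ∈ Finset.Ioc 0 ((K+1)*q), f n :=
      Finset.sum_Ioc_consecutive f (Nat.zero_le _) (by nlinarith)
    have hmap : Finset.Ioc (K*q) ((K+1)*q) = Finset.map (addLeftEmbedding (K*q)) (Finset.Ioc 0 q) := by
      rw [Finset.map_add_left_Ioc]
      congr 1 <;> ring
    have h3 : ∑ n ∈ Finset.Ioc (K*q) ((K+1)*q), f n = ∑ r ∈ Finset.Icc 1 q, f (K*q + r) := by
      rw [hmap, Finset.sum_map]
      rfl
    rw [h1, ← hsplit, ← h2, ih, h3, Finset.sum_range_succ]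

lemma sum_transfer (q : ℕ) [NeZero q] (hq1 : 1 ≤ q) (g : ZMod q → ℂ) :
    ∑ r ∈ Finset.Icc 1 q, g (r : ZMod q) = ∑ z : ZMod q, g z := by
  refine Finset.sum_nbij' (fun r => (r : ZMod q)) (fun z => if z = 0 then q else z.val) ?_ ?_ ?_ ?_ ?_
  · intro r _; exact Finset.mem_univ _
  · intro z _
    by_cases hz : z = 0
    · simp [hz, Finset.mem_Icc, hq1]
    · simp only [hz, if_false, Finset.mem_Icc]
      constructor
      · rcases Nat.eq_zero_or_pos z.val with h | h
        · exact absurd ((ZMod.val_eq_zero z).mp h) hz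
        · exact h
      · exact le_of_lt (ZMod.val_lt z)
  · intro r hr
    simp only [Finset.mem_Icc] at hr
    by_cases h : (r : ZMod q) = 0
    · have hdvd : q ∣ r := (ZMod.natCast_eq_zero_iff r q).mp h
      have hle : q ≤ r := Nat.le_of_dvd (by omega) hdvd
      have : r = q := le_antisymm hr.2 hle
      simp [h, this]
    · simp only [h, if_false]
      have hrq : r < q := by
        rcases Nat.lt_or_ge r q with h' | h'
        · exact h'
        · exfalso; apply h
          have : r = q := le_antisymm hr.2 h'
          simp [this]
      exact ZMod.val_cast_of_lt hrq
  · intro z _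
    by_cases hz : z = 0
    · simp [hz]
    · simp only [hz, if_false]
      simp [ZMod.natCast_val, ZMod.cast_id]
  · intro r _; rfl

lemma abs_gauss (q : ℕ) [NeZero q] (hq : Odd q) (a : ZMod q) :
    ‖∑ z : ZMod q, EE q (a * z + z ^ 2)‖ = Real.sqrt q := by
  have h := gauss_sq q hq a
  rw [Complex.mul_conj] at h
  have h2 : Complex.normSq (∑ z : ZMod q, EE q (a * z + z ^ 2)) = (q : ℝ) := by
    exact_mod_cast h
  rw [Complex.norm_def, h2]

lemma lower_bound_abs (S z : ℂ) (b : ℝ) (h : ‖S - z‖ ≤ b) :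
    ‖z‖ - b ≤ ‖S‖ := by
  have h1 : ‖z‖ ≤ ‖S‖ + ‖S - z‖ := by
    have h2 : z = S - (S - z) := by ring
    calc ‖z‖ = ‖S - (S - z)‖ := by rw [← h2]
      _ ≤ ‖S‖ + ‖S - z‖ := by
          simpa using norm_sub_le S (S - z)
  linarith

lemma key_lemma (q : ℕ) (hq2 : 2 ≤ q) (hqodd : Odd q) (a : ℤ) (K : ℕ) (hK : 1 ≤ K) (θ x : ℝ)
    (hx : x = a / q + θ)
    (hA : (K:ℝ) * q * |θ| ≤ 1 / (8 * π))
    (hB : 4 * π * (q:ℝ)^2 * |θ| ≤ Real.sqrt q / 4) :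
    (K:ℝ) * Real.sqrt q / 4 ≤ ‖weylSum (K*q) x (1/q)‖ := by
  haveI : NeZero q := ⟨by omega⟩
  have hqR : (0:ℝ) < q := by positivity
  have hπ : (0:ℝ) < π := Real.pi_pos
  have hKR : (1:ℝ) ≤ K := by exact_mod_cast hK
  have hθq : ∀ m : ℕ, m ≤ K * q → 2 * π * |(m:ℝ) * θ| ≤ 1 ∧ 4 * π * |(m:ℝ) * θ| ≤ 4 * π * ((K:ℝ)*q*|θ|) := by
    intro m hm
    have h1 : |(m:ℝ) * θ| = m * |θ| := by
      rw [abs_mul, Nat.abs_cast]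
    have h2 : (m:ℝ) ≤ (K:ℝ) * q := by exact_mod_cast hm
    have h3 : (m:ℝ) * |θ| ≤ (K:ℝ) * q * |θ| := by
      apply mul_le_mul_of_nonneg_right h2 (abs_nonneg θ)
    constructor
    · rw [h1]
      calc 2 * π * ((m:ℝ) * |θ|) ≤ 2 * π * (1/(8*π)) := by
            apply mul_le_mul_of_nonneg_left (le_trans h3 hA) (by positivity)
        _ = 1/4 := by field_simp; ring
        _ ≤ 1 := by norm_num
    · rw [h1]
      nlinarith [abs_nonneg θ]
  -- step 1 : rewrite the summand
  have hterm : ∀ n : ℕ, Complex.exp (2 * Real.pi * Complex.I * ((n:ℂ) * x + (n:ℂ) ^ 2 * ((1:ℝ)/q : ℝ)))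
      = EE q ((a : ZMod q) * (n : ZMod q) + (n : ZMod q)^2) * ee ((n:ℝ)*θ) := by
    intro n
    have harg : (n:ℝ) * x + (n:ℝ)^2 * (1/q) = ((n*a + n^2 : ℤ):ℝ)/q + (n:ℝ)*θ := by
      rw [hx]; push_cast; field_simp; ring
    have hL : Complex.exp (2 * Real.pi * Complex.I * ((n:ℂ) * x + (n:ℂ) ^ 2 * ((1:ℝ)/q : ℝ)))
        = ee ((n:ℝ) * x + (n:ℝ)^2 * (1/q)) := by
      rw [ee]; push_cast; ring_nf
    rw [hL, harg, ee_add, EE_int q (n*a+n^2)]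
    congr 2
    push_cast
    ring
  have hws : weylSum (K*q) x (1/q)
      = (∑ j ∈ Finset.range K, ee ((j*q : ℕ) * θ)) *
        (∑ r ∈ Finset.Icc 1 q, EE q ((a : ZMod q) * (r : ZMod q) + (r : ZMod q)^2) * ee ((r:ℝ)*θ)) := by
    rw [weylSum]
    have : ∑ n ∈ Finset.Icc 1 (K*q), Complex.exp (2 * Real.pi * Complex.I * ((n:ℂ) * x + (n:ℂ) ^ 2 * ((1:ℝ)/q : ℝ)))
        = ∑ n ∈ Finset.Icc 1 (K*q), EE q ((a : ZMod q) * (n : ZMod q) + (n : ZMod q)^2) * ee ((n:ℝ)*θ) :=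
      Finset.sum_congr rfl fun n _ => hterm n
    rw [this, sum_blocks]
    rw [Finset.sum_mul]
    refine Finset.sum_congr rfl fun j _ => ?_
    rw [Finset.mul_sum]
    refine Finset.sum_congr rfl fun r _ => ?_
    have hcast : ((j*q + r : ℕ) : ZMod q) = (r : ZMod q) := by
      push_cast
      simp [ZMod.natCast_self]
    have hee : ee (((j*q + r : ℕ) : ℝ) * θ) = ee ((j*q : ℕ) * θ) * ee ((r:ℝ)*θ) := by
      rw [← ee_add]
      congr 1
      push_cast
      ring
    rw [hcast, hee]
    ring
  -- bound A
  have hAbound : (K:ℝ)/2 ≤ ‖∑ j ∈ Finset.range K, ee ((j*q : ℕ) * θ)‖ := by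
    have hdiff : ‖∑ j ∈ Finset.range K, ee ((j*q : ℕ) * θ) - (K:ℂ)‖ ≤ (K:ℝ)/2 := by
      have : ∑ j ∈ Finset.range K, ee ((j*q : ℕ) * θ) - (K:ℂ)
          = ∑ j ∈ Finset.range K, (ee ((j*q : ℕ) * θ) - 1) := by
        rw [Finset.sum_sub_distrib]
        simp
      rw [this]
      calc ‖∑ j ∈ Finset.range K, (ee ((j*q : ℕ) * θ) - 1)‖
          ≤ ∑ j ∈ Finset.range K, ‖ee ((j*q : ℕ) * θ) - 1‖ := by
            simpa using norm_sum_le (Finset.range K) (fun j => ee ((j*q : ℕ) * θ) - 1)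
        _ ≤ ∑ j ∈ Finset.range K, (1/2 : ℝ) := by
            apply Finset.sum_le_sum
            intro j hj
            have hjm : j * q ≤ K * q := Nat.mul_le_mul_right q (le_of_lt (Finset.mem_range.mp hj))
            obtain ⟨hc1, hc2⟩ := hθq (j*q) hjm
            calc ‖ee ((j*q : ℕ) * θ) - 1‖ ≤ 4 * π * |((j*q : ℕ):ℝ) * θ| :=
                abs_ee_sub_one _ hc1
              _ ≤ 4 * π * ((K:ℝ)*q*|θ|) := hc2
              _ ≤ 4 * π * (1/(8*π)) := by
                  apply mul_le_mul_of_nonneg_left hA (by positivity)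
              _ = 1/2 := by field_simp; ring
        _ = (K:ℝ)/2 := by
            rw [Finset.sum_const, Finset.card_range]
            simp; ring
    have htri := lower_bound_abs (∑ j ∈ Finset.range K, ee ((j*q : ℕ) * θ)) (K:ℂ) ((K:ℝ)/2) hdiff
    have habsK : ‖(K:ℂ)‖ = (K:ℝ) := by simp
    linarith
  -- bound B
  set W := ∑ r ∈ Finset.Icc 1 q, EE q ((a : ZMod q) * (r : ZMod q) + (r : ZMod q)^2) * ee ((r:ℝ)*θ) with hW
  have hGauss : ‖∑ r ∈ Finset.Icc 1 q, EE q ((a : ZMod q) * (r : ZMod q) + (r : ZMod q)^2)‖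
      = Real.sqrt q := by
    rw [sum_transfer q (by omega) (fun z => EE q ((a : ZMod q) * z + z^2))]
    exact abs_gauss q hqodd (a : ZMod q)
  have hBbound : 3 * Real.sqrt q / 4 ≤ ‖W‖ := by
    have hdiff : ‖W - ∑ r ∈ Finset.Icc 1 q, EE q ((a : ZMod q) * (r : ZMod q) + (r : ZMod q)^2)‖
        ≤ Real.sqrt q / 4 := by
      have : W - ∑ r ∈ Finset.Icc 1 q, EE q ((a : ZMod q) * (r : ZMod q) + (r : ZMod q)^2)
          = ∑ r ∈ Finset.Icc 1 q, EE q ((a : ZMod q) * (r : ZMod q) + (r : ZMod q)^2) * (ee ((r:ℝ)*θ) - 1) := by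
        rw [hW, ← Finset.sum_sub_distrib]
        refine Finset.sum_congr rfl fun r _ => ?_
        ring
      rw [this]
      calc ‖∑ r ∈ Finset.Icc 1 q, EE q ((a : ZMod q) * (r : ZMod q) + (r : ZMod q)^2) * (ee ((r:ℝ)*θ) - 1)‖
          ≤ ∑ r ∈ Finset.Icc 1 q, ‖EE q ((a : ZMod q) * (r : ZMod q) + (r : ZMod q)^2) * (ee ((r:ℝ)*θ) - 1)‖ := by
            simpa using norm_sum_le (Finset.Icc 1 q) (fun r => EE q ((a : ZMod q) * (r : ZMod q) + (r : ZMod q)^2) * (ee ((r:ℝ)*θ) - 1))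
        _ ≤ ∑ r ∈ Finset.Icc 1 q, (4 * π * ((q:ℝ) * |θ|)) := by
            apply Finset.sum_le_sum
            intro r hr
            have hrq : r ≤ q := (Finset.mem_Icc.mp hr).2
            have hrm : r ≤ K * q := le_trans hrq (by nlinarith [Nat.one_le_iff_ne_zero.mp hK])
            obtain ⟨hc1, _⟩ := hθq r hrm
            rw [norm_mul]
            rw [EE, abs_ee, one_mul]
            calc ‖ee ((r:ℝ)*θ) - 1‖ ≤ 4 * π * |(r:ℝ) * θ| := abs_ee_sub_one _ hc1
              _ ≤ 4 * π * ((q:ℝ) * |θ|) := by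
                  have : |(r:ℝ) * θ| = (r:ℝ) * |θ| := by rw [abs_mul, Nat.abs_cast]
                  rw [this]
                  have hrr : (r:ℝ) ≤ (q:ℝ) := by exact_mod_cast hrq
                  exact mul_le_mul_of_nonneg_left
                    (mul_le_mul_of_nonneg_right hrr (abs_nonneg θ)) (by positivity)
        _ = (q:ℝ) * (4 * π * ((q:ℝ) * |θ|)) := by
            rw [Finset.sum_const, Nat.card_Icc]
            simp
        _ = 4 * π * (q:ℝ)^2 * |θ| := by ring
        _ ≤ Real.sqrt q / 4 := hB
    have htri := lower_bound_abs W (∑ r ∈ Finset.Icc 1 q, EE q ((a : ZMod q) * (r : ZMod q) + (r : ZMod q)^2)) (Real.sqrt q / 4) hdiff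
    rw [hGauss] at htri
    linarith
  rw [hws, norm_mul]
  have hsq : (0:ℝ) ≤ Real.sqrt q := Real.sqrt_nonneg q
  calc (K:ℝ) * Real.sqrt q / 4 ≤ ((K:ℝ)/2) * (3 * Real.sqrt q / 4) := by nlinarith
    _ ≤ ‖∑ j ∈ Finset.range K, ee ((j*q : ℕ) * θ)‖ * ‖W‖ := by
        apply mul_le_mul hAbound hBbound (by positivity) (norm_nonneg _)

lemma abs_weylSum_le (N : ℕ) (x t : ℝ) : ‖weylSum N x t‖ ≤ N := by
  rw [weylSum]
  calc ‖∑ n ∈ Finset.Icc 1 N, Complex.exp (2 * Real.pi * Complex.I * ((n:ℂ) * x + (n:ℂ) ^ 2 * (t:ℂ)))‖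
      ≤ ∑ n ∈ Finset.Icc 1 N, ‖Complex.exp (2 * Real.pi * Complex.I * ((n:ℂ) * x + (n:ℂ) ^ 2 * (t:ℂ)))‖ := by
        simpa using norm_sum_le (Finset.Icc 1 N)
          (fun n : ℕ => Complex.exp (2 * Real.pi * Complex.I * ((n:ℂ) * x + (n:ℂ) ^ 2 * (t:ℂ))))
    _ = ∑ n ∈ Finset.Icc 1 N, (1:ℝ) := by
        refine Finset.sum_congr rfl fun n _ => ?_
        have : Complex.exp (2 * Real.pi * Complex.I * ((n:ℂ) * x + (n:ℂ) ^ 2 * (t:ℂ)))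
            = ee ((n:ℝ) * x + (n:ℝ)^2 * t) := by
          rw [ee]; push_cast; ring_nf
        rw [this, abs_ee]
    _ = N := by rw [Finset.sum_const, Nat.card_Icc]; simp

lemma le_weyl_sup (N : ℕ) (x t₀ : ℝ) (ht₀ : t₀ ∈ Set.Ioo (0:ℝ) 1) :
    ‖weylSum N x t₀‖ ≤ ⨆ t ∈ Set.Ioo (0:ℝ) 1, ‖weylSum N x t‖ := by
  have hbdd : BddAbove (Set.range fun t => ⨆ _ : t ∈ Set.Ioo (0:ℝ) 1, ‖weylSum N x t‖) := by
    refine ⟨N, ?_⟩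
    rintro y ⟨t, rfl⟩
    exact Real.iSup_le (fun _ => abs_weylSum_le N x t) (Nat.cast_nonneg N)
  have h1 : ‖weylSum N x t₀‖ = ⨆ _ : t₀ ∈ Set.Ioo (0:ℝ) 1, ‖weylSum N x t₀‖ :=
    (ciSup_pos (f := fun _ : t₀ ∈ Set.Ioo (0:ℝ) 1 => ‖weylSum N x t₀‖) ht₀).symm
  rw [h1]
  exact le_ciSup hbdd t₀

lemma dens_unbounded (x : ℝ) (c : ℝ) (hc : 0 < c)
    (hS : {r : ℚ | Odd r.den ∧ |x - (r:ℝ)| ≤ (r.den:ℝ) ^ (-c)}.Infinite) (Q : ℕ) :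
    ∃ r : ℚ, (Odd r.den ∧ |x - (r:ℝ)| ≤ (r.den:ℝ) ^ (-c)) ∧ Q ≤ r.den := by
  by_contra hcon
  push_neg at hcon
  apply hS
  set A : ℤ := ⌈(|x|+1) * Q⌉
  have hsub : {r : ℚ | Odd r.den ∧ |x - (r:ℝ)| ≤ (r.den:ℝ) ^ (-c)}
      ⊆ (fun r : ℚ => (r.num, r.den)) ⁻¹' (Set.Icc (-A, 0) (A, Q)) := by
    intro r hr
    obtain ⟨hodd, happ⟩ := hr
    have hden1 : 1 ≤ r.den := r.den_pos
    have hdenR : (1:ℝ) ≤ (r.den:ℝ) := by exact_mod_cast hden1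
    have hpow1 : (r.den:ℝ) ^ (-c) ≤ 1 :=
      Real.rpow_le_one_of_one_le_of_nonpos hdenR (by linarith)
    have hxr : |(r:ℝ)| ≤ |x| + 1 := by
      have := abs_sub_abs_le_abs_sub (r:ℝ) x
      have h2 : |(r:ℝ) - x| ≤ 1 := by
        rw [abs_sub_comm]; linarith
      linarith
    have hdenQ : r.den < Q := hcon r ⟨hodd, happ⟩
    have hnum : |(r.num:ℝ)| ≤ (|x|+1) * Q := by
      have h3 : |(r.num:ℝ)| = |(r:ℝ)| * r.den := by
        rw [← Rat.num_div_den r, Rat.cast_div]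
        push_cast
        rw [abs_div, abs_of_nonneg (by positivity : (0:ℝ) ≤ (r.den:ℝ))]
        field_simp
        rw [Rat.num_div_den]
      rw [h3]
      have : (r.den : ℝ) ≤ Q := by exact_mod_cast hdenQ.le
      have h0 : (0:ℝ) ≤ |(r:ℝ)| := abs_nonneg _
      nlinarith
    have hnumZ : -A ≤ r.num ∧ r.num ≤ A := by
      have hC : |(r.num:ℝ)| ≤ (A:ℝ) := le_trans hnum (Int.le_ceil _)
      have := abs_le.mp hC
      constructor
      · exact_mod_cast this.1
      · exact_mod_cast this.2
    simp only [Set.mem_preimage, Set.mem_Icc, Prod.mk_le_mk]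
    exact ⟨⟨hnumZ.1, Nat.zero_le _⟩, ⟨hnumZ.2, hdenQ.le⟩⟩
  have hfin : (Set.Icc ((-A, 0) : ℤ × ℕ) (A, Q)).Finite := Set.finite_Icc _ _
  have hinj : Function.Injective (fun r : ℚ => (r.num, r.den)) := by
    intro r s h
    have h1 : r.num = s.num := congrArg Prod.fst h
    have h2 : r.den = s.den := congrArg Prod.snd h
    exact Rat.ext h1 h2
  exact Set.Finite.subset (Set.Finite.preimage hinj.injOn hfin) hsub

lemma rpow_threshold (c A : ℝ) (hc : 0 < c) (hA : 0 < A) :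
    ∃ Q : ℕ, ∀ q : ℕ, Q ≤ q → A ≤ (q:ℝ) ^ c := by
  refine ⟨max 1 ⌈A ^ (1/c)⌉₊, fun q hq => ?_⟩
  have hq1 : 1 ≤ q := le_trans (le_max_left _ _) hq
  have h1 : A ^ (1/c) ≤ (q:ℝ) := by
    have h2 : (⌈A ^ (1/c)⌉₊ : ℝ) ≤ (q:ℝ) := by
      exact_mod_cast le_trans (le_max_right _ _) hq
    exact le_trans (Nat.le_ceil _) h2
  have hA1 : A = (A ^ (1/c)) ^ c := by
    rw [← Real.rpow_mul hA.le, one_div_mul_cancel hc.ne', Real.rpow_one]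
  rw [hA1]
  exact Real.rpow_le_rpow (Real.rpow_nonneg hA.le _) h1 hc.le

/-- with `β = (4α-3)/(2(1-α))`, every point of `[0,1]` which is
approximated to order `q^{-(2+β)}` by infinitely many rationals with odd
denominator lies in `O_{α-δ}` for every `δ > 0`; i.e. `J^odd_β ⊆ O_{α-δ}`. -/
theorem jarnik_set_in_divergence_set (α : ℝ) (hα₁ : 3/4 < α) (hα₂ : α < 1)
    (β : ℝ) (hβ : β = (4 * α - 3) / (2 * (1 - α))) (δ : ℝ) (hδ : 0 < δ) :
    {x : ℝ | x ∈ Set.Icc (0:ℝ) 1 ∧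
        {r : ℚ | Odd r.den ∧ |x - (r : ℝ)| ≤ (r.den : ℝ) ^ (-(2 + β))}.Infinite}
      ⊆ {x : ℝ | x ∈ Set.Icc (0:ℝ) 1 ∧
        {N : ℕ | (N : ℝ) ^ (α - δ) ≤ ⨆ t ∈ Set.Ioo (0:ℝ) 1,
          ‖weylSum N x t‖}.Infinite} := by
  intro x hx
  obtain ⟨hxI, hSinf⟩ := hx
  refine ⟨hxI, ?_⟩
  have hπ : (0:ℝ) < π := Real.pi_pos
  have h1α : 0 < 1 - α := by linarith
  have hβpos : 0 < β := by rw [hβ]; apply div_pos <;> linarith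
  have h2β : (0:ℝ) < 2 + β := by linarith
  set δ' := min δ (α/2) with hδ'def
  have hδ'pos : 0 < δ' := lt_min hδ (by linarith)
  have hδ'le : δ' ≤ δ := min_le_left _ _
  have hαδ' : 0 < α - δ' := by
    have := min_le_right δ (α/2); have : δ' ≤ α/2 := this; linarith
  have hid : (2+β) * α = 3/2 + β := by rw [hβ]; field_simp; ring
  obtain ⟨Q₁, hQ₁⟩ := rpow_threshold (1+β) (16*π) (by linarith) (by positivity)
  obtain ⟨Q₂, hQ₂⟩ := rpow_threshold (1/2+β) (16*π) (by linarith) (by positivity)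
  obtain ⟨Q₃, hQ₃⟩ := rpow_threshold ((2+β)*δ') (64*π) (by positivity) (by positivity)
  apply Set.infinite_of_forall_exists_gt
  intro M
  obtain ⟨r, ⟨hodd, happ⟩, hden⟩ := dens_unbounded x (2+β) h2β hSinf
    (max (max Q₁ Q₂) (max Q₃ (max (M+1) 2)))
  set q := r.den with hqdef
  set a := r.num with hadef
  have hq2 : 2 ≤ q := le_trans (le_trans (le_max_right (M+1) 2) (le_trans (le_max_right Q₃ _) (le_max_right (max Q₁ Q₂) _))) hden
  have hqM : M + 1 ≤ q := le_trans (le_trans (le_max_left (M+1) 2) (le_trans (le_max_right Q₃ _) (le_max_right (max Q₁ Q₂) _))) hden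
  have hq0 : (0:ℝ) < q := by positivity
  have hc₁ : 16*π ≤ (q:ℝ)^(1+β) :=
    hQ₁ q (le_trans (le_trans (le_max_left Q₁ Q₂) (le_max_left (max Q₁ Q₂) _)) hden)
  have hc₂ : 16*π ≤ (q:ℝ)^(1/2+β) :=
    hQ₂ q (le_trans (le_trans (le_max_right Q₁ Q₂) (le_max_left (max Q₁ Q₂) _)) hden)
  have hc₃ : 64*π ≤ (q:ℝ)^((2+β)*δ') :=
    hQ₃ q (le_trans (le_trans (le_max_left Q₃ _) (le_max_right (max Q₁ Q₂) _)) hden)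
  set θ := x - (r:ℝ) with hθdef
  have hrcast : (r:ℝ) = (a:ℝ) / q := by rw [Rat.cast_def]
  have hxeq : x = (a:ℝ)/q + θ := by rw [hθdef, hrcast]; ring
  have hT : |θ| ≤ (q:ℝ)^(-(2+β)) := happ
  set K := ⌊(q:ℝ)^(1+β) / (8*π)⌋₊ with hKdef
  have hX2 : (2:ℝ) ≤ (q:ℝ)^(1+β)/(8*π) := by
    rw [le_div_iff₀ (by positivity)]; linarith
  have hK1 : 1 ≤ K := Nat.le_floor (by push_cast; linarith)
  have hKle : (K:ℝ) ≤ (q:ℝ)^(1+β)/(8*π) := Nat.floor_le (by positivity)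
  have hKge : (q:ℝ)^(1+β)/(16*π) ≤ (K:ℝ) := by
    have h1 := Nat.sub_one_lt_floor ((q:ℝ)^(1+β)/(8*π))
    have h2 : (q:ℝ)^(1+β)/(16*π) = ((q:ℝ)^(1+β)/(8*π))/2 := by ring
    rw [h2]
    linarith
  have hprod : (q:ℝ)^(1+β) * ((q:ℝ) * (q:ℝ)^(-(2+β))) = 1 := by
    have i1 : (q:ℝ) * (q:ℝ)^(-(2+β)) = (q:ℝ)^(1+-(2+β)) := by
      rw [Real.rpow_add hq0, Real.rpow_one]
    rw [i1, ← Real.rpow_add hq0, show (1+β+(1+-(2+β))) = (0:ℝ) by ring, Real.rpow_zero]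
  have hq1r : (q:ℝ)^(1:ℝ) = (q:ℝ) := Real.rpow_one _
  have hA : (K:ℝ) * q * |θ| ≤ 1/(8*π) := by
    have h1 : (K:ℝ) * ((q:ℝ) * |θ|) ≤ ((q:ℝ)^(1+β)/(8*π)) * ((q:ℝ) * (q:ℝ)^(-(2+β))) :=
      mul_le_mul hKle (mul_le_mul_of_nonneg_left hT (le_of_lt hq0))
        (by positivity) (by positivity)
    have h2 : ((q:ℝ)^(1+β)/(8*π)) * ((q:ℝ) * (q:ℝ)^(-(2+β))) = 1/(8*π) := by
      rw [div_mul_eq_mul_div, hprod]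
    calc (K:ℝ)*q*|θ| = (K:ℝ)*((q:ℝ)*|θ|) := by ring
      _ ≤ _ := h1
      _ = 1/(8*π) := h2
  have hsqrt : Real.sqrt q = (q:ℝ)^((1:ℝ)/2) := Real.sqrt_eq_rpow _
  have hB : 4*π*(q:ℝ)^2*|θ| ≤ Real.sqrt q / 4 := by
    have hsq : ((q:ℝ))^(2:ℕ) = (q:ℝ)^((2:ℝ)) := by
      rw [← Real.rpow_natCast (q:ℝ) 2]; norm_num
    have e2 : (q:ℝ)^(2:ℝ) * (q:ℝ)^(-(2+β)) = (q:ℝ)^(-β) := by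
      rw [← Real.rpow_add hq0]; congr 1; ring
    have e3 : (q:ℝ)^((1:ℝ)/2) = (q:ℝ)^(1/2+β) * (q:ℝ)^(-β) := by
      rw [← Real.rpow_add hq0]; congr 1; ring
    have h1 : 4*π*(q:ℝ)^2*|θ| ≤ 4*π*((q:ℝ)^(2:ℝ) * (q:ℝ)^(-(2+β))) := by
      rw [← hsq]
      calc 4*π*(q:ℝ)^(2:ℕ)*|θ| ≤ 4*π*(q:ℝ)^(2:ℕ)*((q:ℝ)^(-(2+β))) :=
            mul_le_mul_of_nonneg_left hT (by positivity)
        _ = 4*π*((q:ℝ)^(2:ℕ) * (q:ℝ)^(-(2+β))) := by ring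
    rw [e2] at h1
    have h2 : 16*π*((q:ℝ)^(-β)/4) ≤ (q:ℝ)^(1/2+β)*((q:ℝ)^(-β)/4) :=
      mul_le_mul_of_nonneg_right hc₂ (by positivity)
    have h3 : (q:ℝ)^(1/2+β)*((q:ℝ)^(-β)/4) = Real.sqrt q / 4 := by
      rw [hsqrt, e3]; ring
    have h4 : 16*π*((q:ℝ)^(-β)/4) = 4*π*(q:ℝ)^(-β) := by ring
    linarith
  have hkey := key_lemma q hq2 hodd a K hK1 θ x hxeq hA hB
  have ht₀ : (1:ℝ)/q ∈ Set.Ioo (0:ℝ) 1 := by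
    constructor
    · positivity
    · rw [div_lt_one hq0]
      exact_mod_cast (by omega : 1 < q)
  have hsup := le_weyl_sup (K*q) x ((1:ℝ)/q) ht₀
  refine ⟨K*q, ?_, ?_⟩
  · show ((K*q : ℕ):ℝ)^(α-δ) ≤ _
    have hN1 : (1:ℝ) ≤ ((K*q : ℕ):ℝ) := by
      have : 1 ≤ K*q := Nat.one_le_iff_ne_zero.mpr (by positivity)
      exact_mod_cast this
    have step0 : ((K*q:ℕ):ℝ)^(α-δ) ≤ ((K*q:ℕ):ℝ)^(α-δ') :=
      Real.rpow_le_rpow_of_exponent_le hN1 (by linarith)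
    have step1 : ((K*q:ℕ):ℝ) ≤ (q:ℝ)^((2:ℝ)+β) := by
      push_cast
      have h5 : (K:ℝ) ≤ (q:ℝ)^(1+β) :=
        le_trans hKle (div_le_self (by positivity) (by linarith [Real.pi_gt_three]))
      have h6 : (K:ℝ) * q ≤ (q:ℝ)^(1+β) * (q:ℝ)^(1:ℝ) := by
        rw [hq1r]
        exact mul_le_mul_of_nonneg_right h5 hq0.le
      rw [← Real.rpow_add hq0] at h6
      calc (K:ℝ) * q ≤ (q:ℝ)^(1+β+1) := h6
        _ = (q:ℝ)^((2:ℝ)+β) := by congr 1; ring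
    have step2 : ((K*q:ℕ):ℝ)^(α-δ') ≤ ((q:ℝ)^((2:ℝ)+β))^(α-δ') :=
      Real.rpow_le_rpow (by positivity) step1 hαδ'.le
    have step3 : ((q:ℝ)^((2:ℝ)+β))^(α-δ') = (q:ℝ)^((3/2+β) - (2+β)*δ') := by
      rw [← Real.rpow_mul hq0.le]
      congr 1
      have : ((2:ℝ)+β)*(α-δ') = (2+β)*α - (2+β)*δ' := by ring
      rw [this, hid]
    have step4 : (q:ℝ)^((3/2+β) - (2+β)*δ') ≤ (q:ℝ)^(3/2+β) / (64*π) := by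
      rw [Real.rpow_sub hq0]
      exact div_le_div_of_nonneg_left (by positivity) (by positivity) hc₃
    have step5 : (q:ℝ)^(3/2+β)/(64*π) ≤ (K:ℝ)*Real.sqrt q/4 := by
      have h7 : (q:ℝ)^(1+β)/(16*π) * (Real.sqrt q / 4) ≤ (K:ℝ) * (Real.sqrt q / 4) :=
        mul_le_mul_of_nonneg_right hKge (by positivity)
      have h8 : (q:ℝ)^(1+β)/(16*π) * (Real.sqrt q / 4) = (q:ℝ)^(3/2+β)/(64*π) := by
        rw [hsqrt, show (q:ℝ)^(3/2+β) = (q:ℝ)^(1+β) * (q:ℝ)^((1:ℝ)/2) by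
          rw [← Real.rpow_add hq0]; congr 1; ring]
        ring
      calc (q:ℝ)^(3/2+β)/(64*π) = (q:ℝ)^(1+β)/(16*π) * (Real.sqrt q / 4) := h8.symm
        _ ≤ (K:ℝ) * (Real.sqrt q / 4) := h7
        _ = (K:ℝ)*Real.sqrt q/4 := by ring
    calc ((K*q:ℕ):ℝ)^(α-δ) ≤ ((K*q:ℕ):ℝ)^(α-δ') := step0
      _ ≤ ((q:ℝ)^((2:ℝ)+β))^(α-δ') := step2
      _ = (q:ℝ)^((3/2+β) - (2+β)*δ') := step3
      _ ≤ (q:ℝ)^(3/2+β) / (64*π) := step4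
      _ ≤ (K:ℝ)*Real.sqrt q/4 := step5
      _ ≤ ‖weylSum (K*q) x (1/q)‖ := hkey
      _ ≤ _ := hsup
  · have : M + 1 ≤ K * q := le_trans hqM (Nat.le_mul_of_pos_left q (by omega))
    omega
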